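/- arXiv:math/0103070 — 2 statements merged into one kernel-verified Lean document; each statement's English description precedes it below -/
import Mathlib

section
/- Let P̂⁰ be the 9×9 rank-one projector with entries 1/3 at positions (i,j), i,j ∈ {3,5,7}, and zero elsewhere, and let b be a root of b² + 3b + 1 = 0, i.e. b = (-3 ± √5)/2. Then R̂ = I + 3b·P̂⁰ satisfies the braid equation R̂₁₂R̂₂₃R̂₁₂ = R̂₂₃R̂₁₂R̂₂₃, where R̂₁₂ = R̂ ⊗ I₃ and R̂₂₃ = I₃ ⊗ R̂ are 27×27 matrices. -/
open Matrix Kronecker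

/-- The 9×9 real matrix with entries 1/3 at positions (i,j) for
i,j ∈ {3,5,7} (1-indexed) and 0 elsewhere. -/
noncomputable def P0 : Matrix (Fin 9) (Fin 9) ℝ :=
  Matrix.of fun i j =>
    if (i.val = 2 ∨ i.val = 4 ∨ i.val = 6) ∧ (j.val = 2 ∨ j.val = 4 ∨ j.val = 6)
    then 1 / 3 else 0

/-- Standard identification ℝ⁹ ⊗ ℝ³ ≅ ℝ²⁷. -/
def e93 : Fin 9 × Fin 3 ≃ Fin 27 := finProdFinEquiv.trans (finCongr (by norm_num))

/-- Standard identification ℝ³ ⊗ ℝ⁹ ≅ ℝ²⁷. -/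
def e39 : Fin 3 × Fin 9 ≃ Fin 27 := finProdFinEquiv.trans (finCongr (by norm_num))

def w9 (i : ℕ) : ℤ := if i = 2 ∨ i = 4 ∨ i = 6 then 1 else 0

def N12 : Matrix (Fin 27) (Fin 27) ℤ := fun i j =>
  (w9 (i.val / 3) * w9 (j.val / 3)) * (if i.val % 3 = j.val % 3 then 1 else 0)

def N23 : Matrix (Fin 27) (Fin 27) ℤ := fun i j =>
  (if i.val / 9 = j.val / 9 then 1 else 0) * (w9 (i.val % 9) * w9 (j.val % 9))

lemma e93_symm (i : Fin 27) :
    e93.symm i = (⟨i.val / 3, by omega⟩, ⟨i.val % 3, Nat.mod_lt _ (by norm_num)⟩) := by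
  rw [Equiv.symm_apply_eq]
  apply Fin.ext
  simp [e93, finProdFinEquiv]
  omega

lemma e39_symm (i : Fin 27) :
    e39.symm i = (⟨i.val / 9, by omega⟩, ⟨i.val % 9, Nat.mod_lt _ (by norm_num)⟩) := by
  rw [Equiv.symm_apply_eq]
  apply Fin.ext
  simp [e39, finProdFinEquiv]
  omega

lemma hQ12 : Matrix.reindex e93 e93 (P0 ⊗ₖ (1 : Matrix (Fin 3) (Fin 3) ℝ))
    = (1/3 : ℝ) • (N12.map (Int.cast : ℤ → ℝ)) := by
  ext i j
  simp only [reindex_apply, submatrix_apply, e93_symm, kroneckerMap_apply, P0, of_apply,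
    one_apply, Matrix.smul_apply, Matrix.map_apply, N12, w9, Fin.mk.injEq, smul_eq_mul]
  split_ifs
  all_goals push_cast
  all_goals try ring
  all_goals exfalso; omega

lemma hQ23 : Matrix.reindex e39 e39 ((1 : Matrix (Fin 3) (Fin 3) ℝ) ⊗ₖ P0)
    = (1/3 : ℝ) • (N23.map (Int.cast : ℤ → ℝ)) := by
  ext i j
  simp only [reindex_apply, submatrix_apply, e39_symm, kroneckerMap_apply, P0, of_apply,
    one_apply, Matrix.smul_apply, Matrix.map_apply, N23, w9, Fin.mk.injEq, smul_eq_mul]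
  split_ifs
  all_goals push_cast
  all_goals try ring
  all_goals exfalso; omega

set_option maxRecDepth 20000 in
lemma key1 : N12 * N12 = N12 + N12 + N12 := by decide
set_option maxRecDepth 20000 in
lemma key2 : N23 * N23 = N23 + N23 + N23 := by decide
set_option maxRecDepth 20000 in
lemma key3 : N12 * N23 * N12 = N12 := by decide
set_option maxRecDepth 20000 in
lemma key4 : N23 * N12 * N23 = N23 := by decide

theorem stmt_8 (b : ℝ) (hb : b ^ 2 + 3 * b + 1 = 0)
    (Rh : Matrix (Fin 9) (Fin 9) ℝ) (hRh : Rh = 1 + (3 * b) • P0)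
    (R12 R23 : Matrix (Fin 27) (Fin 27) ℝ)
    (h12 : R12 = Matrix.reindex e93 e93 (Rh ⊗ₖ (1 : Matrix (Fin 3) (Fin 3) ℝ)))
    (h23 : R23 = Matrix.reindex e39 e39 ((1 : Matrix (Fin 3) (Fin 3) ℝ) ⊗ₖ Rh)) :
    R12 * R23 * R12 = R23 * R12 * R23 := by
  have φ := (Int.castRingHom ℝ).mapMatrix (m := Fin 27)
  set A : Matrix (Fin 27) (Fin 27) ℝ := (Int.castRingHom ℝ).mapMatrix N12 with hA
  set B : Matrix (Fin 27) (Fin 27) ℝ := (Int.castRingHom ℝ).mapMatrix N23 with hB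
  have hA2 : A * A = A + A + A := by
    rw [hA, ← _root_.map_mul, key1, _root_.map_add, _root_.map_add]
  have hB2 : B * B = B + B + B := by
    rw [hB, ← _root_.map_mul, key2, _root_.map_add, _root_.map_add]
  have hABA : A * B * A = A := by
    rw [hA, hB, ← _root_.map_mul, ← _root_.map_mul, key3]
  have hBAB : B * A * B = B := by
    rw [hA, hB, ← _root_.map_mul, ← _root_.map_mul, key4]
  have hA' : A = N12.map (Int.cast : ℤ → ℝ) := rfl
  have hB' : B = N23.map (Int.cast : ℤ → ℝ) := rfl
  have h12' : R12 = 1 + b • A := by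
    rw [h12, hRh, Matrix.add_kronecker, Matrix.smul_kronecker, Matrix.one_kronecker_one]
    have hq := hQ12
    rw [← hA'] at hq
    simp only [Matrix.reindex_apply, Matrix.submatrix_add, Matrix.submatrix_smul,
      Pi.add_apply, Pi.smul_apply, Matrix.submatrix_one_equiv] at hq ⊢
    rw [hq, smul_smul]
    norm_num
    congr 1
    ring
  have h23' : R23 = 1 + b • B := by
    rw [h23, hRh, Matrix.kronecker_add, Matrix.kronecker_smul, Matrix.one_kronecker_one]
    have hq := hQ23
    rw [← hB'] at hq
    simp only [Matrix.reindex_apply, Matrix.submatrix_add, Matrix.submatrix_smul,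
      Pi.add_apply, Pi.smul_apply, Matrix.submatrix_one_equiv] at hq ⊢
    rw [hq, smul_smul]
    norm_num
    congr 1
    ring
  rw [h12', h23']
  simp only [add_mul, mul_add, one_mul, mul_one, smul_mul_assoc, mul_smul_comm, smul_smul,
    hA2, hB2, hABA, hBAB, smul_add]
  match_scalars
  any_goals ring
  all_goals try linear_combination b * hb
  all_goals linear_combination (-b) * hb
end

section
/- For q a nonzero scalar with q² ≠ −1 and q³ ≠ 1, the formulas c₁ = v+v² + v²w q²/((q²+1)(q²+q+1)) + vw² q³/(q³−1)², c₂ = w+w² + w²v q(q²−q+1)/((q²+1)(q²+q+1)) − wv² q(q²−q+1)/(q²+1)² + w³q²/(q²+q+1)², and c₅ = (v/(q³−1)²)((q³−1)v+(q²+1)w)((q³−1)v−q(q²+1)w) all vanish at (v,w) = (−(1+q⁻²), −(1−q⁻³)) and at (v,w) = (−(1+q²), −(1−q³)). -/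
/-- Coefficient `c₁` from (6.78). -/
def c₁ {K : Type*} [Field K] (q v w : K) : K :=
  v + v ^ 2 + v ^ 2 * w * q ^ 2 / ((q ^ 2 + 1) * (q ^ 2 + q + 1))
    + v * w ^ 2 * q ^ 3 / (q ^ 3 - 1) ^ 2

/-- Coefficient `c₂` from (6.78). -/
def c₂ {K : Type*} [Field K] (q v w : K) : K :=
  w + w ^ 2 + w ^ 2 * v * q * (q ^ 2 - q + 1) / ((q ^ 2 + 1) * (q ^ 2 + q + 1))
    - w * v ^ 2 * q * (q ^ 2 - q + 1) / (q ^ 2 + 1) ^ 2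
    + w ^ 3 * q ^ 2 / (q ^ 2 + q + 1) ^ 2

/-- Coefficient `c₅` from (6.78). -/
def c₅ {K : Type*} [Field K] (q v w : K) : K :=
  v / (q ^ 3 - 1) ^ 2 * ((q ^ 3 - 1) * v + (q ^ 2 + 1) * w)
    * ((q ^ 3 - 1) * v - q * (q ^ 2 + 1) * w)

set_option maxHeartbeats 2000000 in
theorem stmt_19 {K : Type*} [Field K] (q : K) (hq : q ≠ 0)
    (h1 : q ^ 2 + 1 ≠ 0) (h2 : q ^ 3 - 1 ≠ 0) (h3 : q ^ 2 + q + 1 ≠ 0)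
    (v w : K)
    (h : (v = -(1 + q⁻¹ ^ 2) ∧ w = -(1 - q⁻¹ ^ 3)) ∨
         (v = -(1 + q ^ 2) ∧ w = -(1 - q ^ 3))) :
    c₁ q v w = 0 ∧ c₂ q v w = 0 ∧ c₅ q v w = 0 := by
  have hD1 : q ^ 13 + q ^ 14 + q ^ 15 * 2 + q ^ 16 + q ^ 17 ≠ 0 := by
    have h' : q ^ 13 * ((q ^ 2 + 1) * (q ^ 2 + q + 1)) ≠ 0 :=
      mul_ne_zero (pow_ne_zero _ hq) (mul_ne_zero h1 h3)
    intro hc; exact h' (by linear_combination hc)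
  have hD2 : q ^ 17 + q ^ 18 + q ^ 19 * 2 + q ^ 20 + q ^ 21 ≠ 0 := by
    have h' : q ^ 17 * ((q ^ 2 + 1) * (q ^ 2 + q + 1)) ≠ 0 :=
      mul_ne_zero (pow_ne_zero _ hq) (mul_ne_zero h1 h3)
    intro hc; exact h' (by linear_combination hc)
  have h3' : q * (q + 1) + 1 ≠ 0 := by intro hc; exact h3 (by linear_combination hc)
  rcases h with ⟨hv, hw⟩ | ⟨hv, hw⟩ <;> subst hv hw
  · refine ⟨?_, ?_, ?_⟩
    · simp only [c₁]
      field_simp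
      ring
    · simp only [c₂]
      field_simp
      ring
    · simp only [c₅]
      field_simp
      ring
  · refine ⟨?_, ?_, ?_⟩
    · simp only [c₁]
      field_simp
      ring
    · simp only [c₂]
      field_simp
      ring
    · simp only [c₅]
      field_simp
      ring
end
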